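/- Let B be a symmetric positive definite n×n matrix and W a symmetric invertible n×n matrix. Then the quadratic form z ↦ ⟨B⁻¹z, z⟩ − ⟨W⁻¹z, z⟩ on R^n is negative definite if and only if 0 < W < B (i.e., W is positive definite and B − W is positive definite). -/

import Mathlib

open Matrix

lemma dot_sym {n : ℕ} {P : Matrix (Fin n) (Fin n) ℝ} (hPt : Pᵀ = P) (a b : Fin n → ℝ) :
    (P *ᵥ a) ⬝ᵥ b = a ⬝ᵥ (P *ᵥ b) := by
  rw [dotProduct_comm, dotProduct_mulVec, ← mulVec_transpose, hPt, dotProduct_comm]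

lemma key {n : ℕ} {P : Matrix (Fin n) (Fin n) ℝ} (hP : P.PosDef) (z y : Fin n → ℝ) :
    2 * (y ⬝ᵥ z) - (P *ᵥ y) ⬝ᵥ y ≤ (P⁻¹ *ᵥ z) ⬝ᵥ z := by
  have hinv : P * P⁻¹ = 1 := mul_nonsing_inv _ hP.det_pos.ne'.isUnit
  have hPt : Pᵀ = P := by exact (isHermitian_iff_isSymm.mp hP.isHermitian).eq
  have hc : P *ᵥ (P⁻¹ *ᵥ z) = z := by rw [mulVec_mulVec, hinv, one_mulVec]
  have h0 : 0 ≤ (y - P⁻¹ *ᵥ z) ⬝ᵥ (P *ᵥ (y - P⁻¹ *ᵥ z)) := by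
    have := hP.posSemidef.dotProduct_mulVec_nonneg (y - P⁻¹ *ᵥ z)
    simpa using this
  rw [mulVec_sub, dotProduct_sub, sub_dotProduct, sub_dotProduct, hc,
    ← dot_sym hPt (P⁻¹ *ᵥ z) y, hc] at h0
  have h1 : (P *ᵥ y) ⬝ᵥ y = y ⬝ᵥ (P *ᵥ y) := dot_sym hPt y y
  have h2 : z ⬝ᵥ y = y ⬝ᵥ z := dotProduct_comm _ _
  have h3 : z ⬝ᵥ (P⁻¹ *ᵥ z) = (P⁻¹ *ᵥ z) ⬝ᵥ z := dotProduct_comm _ _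
  linarith


/-- For `B` symmetric positive definite and `W` symmetric invertible, the form
`z ↦ ⟨B⁻¹z,z⟩ − ⟨W⁻¹z,z⟩` is negative definite iff `0 < W < B`. -/
theorem stmt_2 (n : ℕ) (B W : Matrix (Fin n) (Fin n) ℝ)
    (hB : B.PosDef) (hW : W.IsSymm) (hWinv : IsUnit W.det) :
    (∀ z : Fin n → ℝ, z ≠ 0 →
        (B⁻¹.mulVec z) ⬝ᵥ z - (W⁻¹.mulVec z) ⬝ᵥ z < 0) ↔
      (W.PosDef ∧ (B - W).PosDef) := by
  have hWit : (W⁻¹)ᵀ = W⁻¹ := by rw [transpose_nonsing_inv, hW.eq]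
  have hWiherm : W⁻¹.IsHermitian := by
    rw [Matrix.IsHermitian, conjTranspose_eq_transpose_of_trivial, hWit]
  have hWherm : W.IsHermitian := by
    rw [Matrix.IsHermitian, conjTranspose_eq_transpose_of_trivial, hW.eq]
  constructor
  · intro h
    have hWi : W⁻¹.PosDef := by
      refine PosDef.of_dotProduct_mulVec_pos hWiherm (fun x hx => ?_)
      have h1 := h x hx
      have h2 := hB.inv.dotProduct_mulVec_pos hx
      simp only [star_trivial] at h2 ⊢
      rw [dotProduct_comm] at h2
      linarith [dotProduct_comm x (W⁻¹ *ᵥ x)]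
    have hWpos : W.PosDef := posDef_inv_iff.mp hWi
    refine ⟨hWpos, PosDef.of_dotProduct_mulVec_pos (hB.isHermitian.sub hWherm) fun y hy => ?_⟩
    have hWz : W⁻¹ *ᵥ (W *ᵥ y) = y := by
      rw [mulVec_mulVec, nonsing_inv_mul _ hWinv, one_mulVec]
    have hz : W *ᵥ y ≠ 0 := by
      intro hzz
      apply hy
      rw [← hWz, hzz, mulVec_zero]
    have hk := key hB (W *ᵥ y) y
    have hh := h (W *ᵥ y) hz
    rw [hWz] at hh
    have e1 : (B *ᵥ y) ⬝ᵥ y = y ⬝ᵥ (B *ᵥ y) := dot_sym (isHermitian_iff_isSymm.mp hB.isHermitian).eq _ _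
    have e2 : y ⬝ᵥ (W *ᵥ y) = (W *ᵥ y) ⬝ᵥ y := dotProduct_comm _ _
    simp only [star_trivial, sub_mulVec, dotProduct_sub]
    linarith
  · rintro ⟨hWp, hBW⟩ z hz
    have hBz : B *ᵥ (B⁻¹ *ᵥ z) = z := by
      rw [mulVec_mulVec, mul_nonsing_inv _ hB.det_pos.ne'.isUnit, one_mulVec]
    have hy : B⁻¹ *ᵥ z ≠ 0 := by
      intro hyy
      apply hz
      rw [← hBz, hyy, mulVec_zero]
    have hk := key hWp z (B⁻¹ *ᵥ z)
    have hlt := hBW.dotProduct_mulVec_pos hy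
    simp only [star_trivial, sub_mulVec, dotProduct_sub] at hlt
    have hBt : Bᵀ = B := by exact (isHermitian_iff_isSymm.mp hB.isHermitian).eq
    have e1 : (B⁻¹ *ᵥ z) ⬝ᵥ (B *ᵥ (B⁻¹ *ᵥ z)) = (B⁻¹ *ᵥ z) ⬝ᵥ z := by rw [hBz]
    have e2 : (W *ᵥ (B⁻¹ *ᵥ z)) ⬝ᵥ (B⁻¹ *ᵥ z) = (B⁻¹ *ᵥ z) ⬝ᵥ (W *ᵥ (B⁻¹ *ᵥ z)) :=
      dot_sym (isHermitian_iff_isSymm.mp hWp.isHermitian).eq _ _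
    have e3 : (B⁻¹ *ᵥ z) ⬝ᵥ z = z ⬝ᵥ (B⁻¹ *ᵥ z) := dotProduct_comm _ _
    show (B⁻¹ *ᵥ z) ⬝ᵥ z - (W⁻¹ *ᵥ z) ⬝ᵥ z < 0
    linarith
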